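/- Let p be a prime, q = p^n, m ≥ 1, l = q^m, and π a finite p-group. The embedding of fields 𝔽_q ⊆ 𝔽_l induces an injective ring homomorphism W(𝔽_q) → W(𝔽_l) of Witt vector rings and hence a group homomorphism ι : M_q → M_l between the abelian groups defined in the context. Then ι is injective. -/

import Mathlib

namespace GRJJ


variable (R : Type*) [CommRing R] (π : Type*) [Group π]

/-- The augmentation homomorphism of a group ring, sending every `g : π` to `1`. -/
noncomputable def aug : MonoidAlgebra R π →ₐ[R] R :=
  MonoidAlgebra.lift R R π 1

/-- The augmentation ideal of a group ring. -/
noncomputable def augIdeal : Ideal (MonoidAlgebra R π) :=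
  RingHom.ker (aug R π).toRingHom

/-- The group `1 + I` of normalized units of the group ring `R[π]`:
units `u` with `u - 1` in the augmentation ideal. -/
noncomputable def normalizedUnits : Subgroup (MonoidAlgebra R π)ˣ where
  carrier := {u | (u : MonoidAlgebra R π) - 1 ∈ augIdeal R π}
  one_mem' := by simp
  mul_mem' := by
    intro u v hu hv
    have h : ((u * v : (MonoidAlgebra R π)ˣ) : MonoidAlgebra R π) - 1 =
        (u : MonoidAlgebra R π) * ((v : MonoidAlgebra R π) - 1) +
          ((u : MonoidAlgebra R π) - 1) := by
      push_cast
      noncomm_ring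
    show ((u * v : (MonoidAlgebra R π)ˣ) : MonoidAlgebra R π) - 1 ∈ augIdeal R π
    rw [h]
    exact (augIdeal R π).add_mem ((augIdeal R π).mul_mem_left _ hv) hu
  inv_mem' := by
    intro u hu
    have h : ((u⁻¹ : (MonoidAlgebra R π)ˣ) : MonoidAlgebra R π) - 1 =
        ((u⁻¹ : (MonoidAlgebra R π)ˣ) : MonoidAlgebra R π) *
          (1 - (u : MonoidAlgebra R π)) := by
      rw [mul_sub, mul_one, Units.inv_mul]
    show ((u⁻¹ : (MonoidAlgebra R π)ˣ) : MonoidAlgebra R π) - 1 ∈ augIdeal R π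
    rw [h]
    refine (augIdeal R π).mul_mem_left _ ?_
    simpa using (augIdeal R π).neg_mem hu



variable (p : ℕ) [Fact p.Prime]

/-- The map `Ψ : R_q[π] → R_q[π]`, `Σ aₘ g ↦ Σ φ(aₘ) gᵖ`, where `φ` is the Frobenius
endomorphism of the Witt vectors `R_q = W(𝔽_q)`. -/
noncomputable def psi (K : Type*) [CommRing K] (π : Type*) [Group π]
    (x : MonoidAlgebra (WittVector p K) π) : MonoidAlgebra (WittVector p K) π :=
  MonoidAlgebra.ofCoeff (Finsupp.mapDomain (fun g : π => g ^ p)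
    (Finsupp.mapRange (⇑(WittVector.frobenius : WittVector p K →+* WittVector p K))
      (map_zero _) x.coeff))

/-- The subgroup of relations defining `M_q`: the additive subgroup of `R_q[π]` generated
by the elements `x - g⁻¹xg` and `p•x - Ψ(x)` for `x` in the augmentation ideal. -/
noncomputable def MqRel (K : Type*) [CommRing K] (π : Type*) [Group π] :
    AddSubgroup (MonoidAlgebra (WittVector p K) π) :=
  AddSubgroup.closure
    ({y | ∃ x ∈ augIdeal (WittVector p K) π, ∃ g : π,
        y = x - MonoidAlgebra.of (WittVector p K) π g⁻¹ * x *
          MonoidAlgebra.of (WittVector p K) π g} ∪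
      {y | ∃ x ∈ augIdeal (WittVector p K) π, y = p • x - psi p K π x})

/-- The abelian group `M_q`: the quotient of the augmentation ideal of `W(𝔽_q)[π]` by the
relations `x ≡ g⁻¹xg` and `p•x ≡ Ψ(x)`. -/
abbrev Mq (K : Type*) [CommRing K] (π : Type*) [Group π] :=
  ↥(augIdeal (WittVector p K) π).toAddSubgroup ⧸
    ((MqRel p K π).addSubgroupOf (augIdeal (WittVector p K) π).toAddSubgroup)


/-! ### Auxiliary development -/

section Aux

/-- A choice of representative for each conjugacy class. -/
noncomputable def crep {G : Type*} [Monoid G] (g : G) : G :=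
  (ConjClasses.mk g).out

lemma crep_mk_eq {G : Type*} [Monoid G] (g : G) :
    ConjClasses.mk (crep g) = ConjClasses.mk g := by
  rw [crep, ← ConjClasses.quotient_mk_eq_mk]
  exact Quotient.out_eq (s := IsConj.setoid G) _

lemma isConj_crep {G : Type*} [Monoid G] (g : G) : IsConj (crep g) g :=
  ConjClasses.mk_eq_mk_iff_isConj.mp (crep_mk_eq g)

lemma crep_eq_of_isConj {G : Type*} [Monoid G] {a b : G} (h : IsConj a b) :
    crep a = crep b := by
  rw [crep, crep, ConjClasses.mk_eq_mk_iff_isConj.mpr h]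

lemma crep_crep {G : Type*} [Monoid G] (g : G) : crep (crep g) = crep g :=
  crep_eq_of_isConj (isConj_crep g)

lemma crep_one {G : Type*} [Group G] : crep (1 : G) = 1 := by
  obtain ⟨c, hc⟩ := isConj_iff.mp (isConj_crep (1 : G))
  have : crep (1 : G) = c⁻¹ * (c * crep 1 * c⁻¹) * c := by group
  rw [hc] at this
  simpa using this

lemma crep_pow {G : Type*} [Group G] (g : G) (m : ℕ) :
    crep ((crep g) ^ m) = crep (g ^ m) := by
  apply crep_eq_of_isConj
  obtain ⟨c, hc⟩ := isConj_iff.mp (isConj_crep g)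
  refine isConj_iff.mpr ⟨c, ?_⟩
  have : (MulAut.conj c) ((crep g) ^ m) = ((MulAut.conj c) (crep g)) ^ m := map_pow _ _ _
  simpa [MulAut.conj_apply, hc] using this

lemma crep_conj {G : Type*} [Group G] (g h : G) : crep (g⁻¹ * h * g) = crep h := by
  apply crep_eq_of_isConj
  refine isConj_iff.mpr ⟨g, ?_⟩
  group

end Aux

section Homs

variable (p : ℕ) [Fact p.Prime] (K : Type*) [CommRing K] (π : Type*) [Group π]

/-- Averaging over conjugacy classes: sends `Σ aₘ g` to `Σ aₘ crep g`. -/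
noncomputable def rho : MonoidAlgebra (WittVector p K) π →+ MonoidAlgebra (WittVector p K) π :=
  { toFun := MonoidAlgebra.mapDomain crep
    map_zero' := MonoidAlgebra.mapDomain_zero _
    map_add' := MonoidAlgebra.mapDomain_add _ }

/-- `psi` bundled as an additive homomorphism. -/
noncomputable def psiHom : MonoidAlgebra (WittVector p K) π →+ MonoidAlgebra (WittVector p K) π where
  toFun := psi p K π
  map_zero' := by simp [psi]
  map_add' x y := by
    simp [psi, MonoidAlgebra.coeff_add, Finsupp.mapRange_add (map_add _), Finsupp.mapDomain_add,
      MonoidAlgebra.ofCoeff_add]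

lemma rho_single (g : π) (a : WittVector p K) :
    rho p K π (MonoidAlgebra.single g a) = MonoidAlgebra.single (crep g) a :=
  MonoidAlgebra.mapDomain_single

lemma psiHom_single (g : π) (a : WittVector p K) :
    psiHom p K π (MonoidAlgebra.single g a) =
      MonoidAlgebra.single (g ^ p) (WittVector.frobenius a) := by
  show psi p K π _ = _
  simp [psi, MonoidAlgebra.coeff_single, Finsupp.mapRange_single, Finsupp.mapDomain_single,
    MonoidAlgebra.ofCoeff_single]

lemma aug_single (g : π) (a : WittVector p K) :
    aug (WittVector p K) π (MonoidAlgebra.single g a) = a := by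
  have : (MonoidAlgebra.single g a : MonoidAlgebra (WittVector p K) π) =
      MonoidAlgebra.single g a := rfl
  rw [aug, this, MonoidAlgebra.lift_single]
  simp

lemma mem_augIdeal_iff (x : MonoidAlgebra (WittVector p K) π) :
    x ∈ augIdeal (WittVector p K) π ↔ aug (WittVector p K) π x = 0 :=
  RingHom.mem_ker

end Homs

section Witt

variable {p : ℕ} [Fact p.Prime] {K L : Type*} [CommRing K] [CharP K p] [CommRing L] [CharP L p]
  (f : K →+* L)

lemma wmap_frobenius (a : WittVector p K) :
    WittVector.map f (WittVector.frobenius a) =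
      WittVector.frobenius (WittVector.map f a) := by
  ext n
  rw [WittVector.frobenius_eq_map_frobenius, WittVector.frobenius_eq_map_frobenius]
  simp only [WittVector.map_coeff, frobenius_def, map_pow]

variable [PerfectRing K p] [PerfectRing L p] (hf : Function.Injective f)

lemma wfrob_injective : Function.Injective (WittVector.frobenius : WittVector p L → WittVector p L) :=
  (WittVector.frobeniusEquiv p L).injective

lemma wversch_injective :
    Function.Injective (WittVector.verschiebung : WittVector p L →+ WittVector p L) := by
  intro a b hab
  ext n
  have := congrArg (fun z => WittVector.coeff z (n + 1)) hab
  simpa [WittVector.verschiebung_coeff_succ] using this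

include hf in
lemma witt_div (a : WittVector p L) (b : WittVector p K)
    (h : WittVector.map f b = p • a) : ∃ c : WittVector p K, a = WittVector.map f c := by
  have hpa : p • a = WittVector.verschiebung (WittVector.frobenius a) := by
    rw [WittVector.verschiebung_frobenius]
    rw [nsmul_eq_mul]
    ring
  have hb0 : b.coeff 0 = 0 := by
    have h0 : (WittVector.map f b).coeff 0 = (0 : L) := by
      rw [h, hpa, WittVector.verschiebung_coeff_zero]
    rw [WittVector.map_coeff] at h0
    exact hf (by simpa using h0)
  set b' : WittVector p K := WittVector.mk p (fun n => b.coeff (n + 1)) with hb'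
  have hvb : WittVector.verschiebung b' = b := by
    ext n
    cases n with
    | zero => rw [WittVector.verschiebung_coeff_zero, hb0]
    | succ n => rw [WittVector.verschiebung_coeff_succ, hb', WittVector.coeff_mk]
  have hmain : WittVector.map f b' = WittVector.frobenius a := by
    apply wversch_injective
    rw [← WittVector.map_verschiebung, hvb, h, hpa]
  refine ⟨(WittVector.frobeniusEquiv p K).symm b', ?_⟩
  apply wfrob_injective
  rw [← wmap_frobenius]
  have : WittVector.frobenius ((WittVector.frobeniusEquiv p K).symm b') = b' := by
    have := (WittVector.frobeniusEquiv p K).apply_symm_apply b'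
    rwa [WittVector.frobeniusEquiv_apply] at this
  rw [this, hmain]

end Witt

set_option linter.unusedSectionVars false

section Maps

variable {p : ℕ} [Fact p.Prime] {K L : Type*} [CommRing K] [CharP K p] [CommRing L] [CharP L p]
  (f : K →+* L) {π : Type*} [Group π]

/-- The coefficientwise map `W(K)[π] → W(L)[π]`. -/
noncomputable def fmap : MonoidAlgebra (WittVector p K) π →+ MonoidAlgebra (WittVector p L) π :=
  { toFun := MonoidAlgebra.map (WittVector.map f).toAddMonoidHom
    map_zero' := MonoidAlgebra.map_zero _
    map_add' := MonoidAlgebra.map_add _ }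

lemma fmap_apply (x : MonoidAlgebra (WittVector p K) π) :
    fmap f x = MonoidAlgebra.ofCoeff (Finsupp.mapRange
      (⇑(WittVector.map f : WittVector p K →+* WittVector p L)) (map_zero _) x.coeff) := rfl

lemma fmap_single (g : π) (a : WittVector p K) :
    fmap f (MonoidAlgebra.single g a) = MonoidAlgebra.single g (WittVector.map f a) := by
  rw [fmap_apply, MonoidAlgebra.coeff_single, Finsupp.mapRange_single, MonoidAlgebra.ofCoeff_single]

lemma rho_rho (x : MonoidAlgebra (WittVector p K) π) :
    rho p K π (rho p K π x) = rho p K π x := by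
  induction x using MonoidAlgebra.induction_linear with
  | zero => simp
  | add a b ha hb => simp only [map_add, ha, hb]
  | single g a => rw [rho_single, rho_single, crep_crep]

lemma rho_psi_rho (x : MonoidAlgebra (WittVector p K) π) :
    rho p K π (psiHom p K π (rho p K π x)) = rho p K π (psiHom p K π x) := by
  induction x using MonoidAlgebra.induction_linear with
  | zero => simp
  | add a b ha hb => simp only [map_add, ha, hb]
  | single g a =>
      rw [rho_single, psiHom_single, psiHom_single, rho_single, rho_single, crep_pow]

lemma fmap_rho (x : MonoidAlgebra (WittVector p K) π) :
    fmap f (rho p K π x) = rho p L π (fmap f x) := by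
  induction x using MonoidAlgebra.induction_linear with
  | zero => simp
  | add a b ha hb => simp only [map_add, ha, hb]
  | single g a => rw [rho_single, fmap_single, fmap_single, rho_single]

lemma fmap_psi (x : MonoidAlgebra (WittVector p K) π) :
    fmap f (psiHom p K π x) = psiHom p L π (fmap f x) := by
  induction x using MonoidAlgebra.induction_linear with
  | zero => simp
  | add a b ha hb => simp only [map_add, ha, hb]
  | single g a =>
      rw [psiHom_single, fmap_single, fmap_single, psiHom_single, wmap_frobenius]

lemma aug_rho (x : MonoidAlgebra (WittVector p K) π) :
    aug (WittVector p K) π (rho p K π x) = aug (WittVector p K) π x := by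
  induction x using MonoidAlgebra.induction_linear with
  | zero => simp
  | add a b ha hb => simp only [map_add, ha, hb]
  | single g a => rw [rho_single, aug_single, aug_single]

lemma aug_fmap (x : MonoidAlgebra (WittVector p K) π) :
    aug (WittVector p L) π (fmap f x) =
      WittVector.map f (aug (WittVector p K) π x) := by
  induction x using MonoidAlgebra.induction_linear with
  | zero => simp
  | add a b ha hb => simp only [map_add, ha, hb]
  | single g a => rw [fmap_single, aug_single, aug_single]

lemma fmap_injective (hf : Function.Injective f) :
    Function.Injective (fmap f : MonoidAlgebra (WittVector p K) π →+ _) := by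
  intro a b hab
  refine MonoidAlgebra.ext (Finsupp.ext fun g => WittVector.map_injective f hf ?_)
  have := congrArg (fun z : MonoidAlgebra (WittVector p L) π => z.coeff g) hab
  simpa [fmap_apply, Finsupp.mapRange_apply] using this

end Maps

section Rel

variable (p : ℕ) [Fact p.Prime] (K : Type*) [CommRing K] (π : Type*) [Group π]

/-- The set of conjugation relations. -/
noncomputable def conjSet : Set (MonoidAlgebra (WittVector p K) π) :=
  {y | ∃ x ∈ augIdeal (WittVector p K) π, ∃ g : π,
      y = x - MonoidAlgebra.of (WittVector p K) π g⁻¹ * x *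
        MonoidAlgebra.of (WittVector p K) π g}

/-- The set of `p`-power relations. -/
noncomputable def dSet : Set (MonoidAlgebra (WittVector p K) π) :=
  {y | ∃ x ∈ augIdeal (WittVector p K) π, y = p • x - psi p K π x}

lemma MqRel_eq_sup :
    MqRel p K π = AddSubgroup.closure (conjSet p K π) ⊔ AddSubgroup.closure (dSet p K π) := by
  rw [MqRel, AddSubgroup.closure_union]
  rfl

lemma mem_MqRel_iff (z : MonoidAlgebra (WittVector p K) π) :
    z ∈ MqRel p K π ↔ ∃ c ∈ AddSubgroup.closure (conjSet p K π),
      ∃ y ∈ augIdeal (WittVector p K) π, z = c + (p • y - psi p K π y) := by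
  rw [MqRel_eq_sup, AddSubgroup.mem_sup]
  constructor
  · rintro ⟨c, hc, d, hd, rfl⟩
    -- analyse membership of d in the closure of dSet
    have hdset : d ∈ AddSubgroup.map
        ((p • AddMonoidHom.id (MonoidAlgebra (WittVector p K) π)) - psiHom p K π)
        (augIdeal (WittVector p K) π).toAddSubgroup := by
      have hsub : dSet p K π ⊆ (AddSubgroup.map
          ((p • AddMonoidHom.id (MonoidAlgebra (WittVector p K) π)) - psiHom p K π)
          (augIdeal (WittVector p K) π).toAddSubgroup : Set _) := by
        rintro w ⟨x, hx, rfl⟩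
        exact ⟨x, hx, by simp [psiHom]; rfl⟩
      have := (AddSubgroup.closure_le _).mpr hsub hd
      exact this
    obtain ⟨y, hy, rfl⟩ := hdset
    exact ⟨c, hc, y, hy, by simp [psiHom]; rfl⟩
  · rintro ⟨c, hc, y, hy, rfl⟩
    exact ⟨c, hc, p • y - psi p K π y, AddSubgroup.subset_closure ⟨y, hy, rfl⟩, rfl⟩

variable {p K π}

lemma conj_eq_mapDomain (g : π) (x : MonoidAlgebra (WittVector p K) π) :
    MonoidAlgebra.of (WittVector p K) π g⁻¹ * x * MonoidAlgebra.of (WittVector p K) π g =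
      MonoidAlgebra.mapDomain (fun h => g⁻¹ * h * g) x := by
  induction x using MonoidAlgebra.induction_linear with
  | zero => simp
  | add a b ha hb =>
      rw [MonoidAlgebra.mapDomain_add, ← ha, ← hb]
      noncomm_ring
  | single h a =>
      rw [MonoidAlgebra.mapDomain_single, MonoidAlgebra.of_apply]
      have h1 : (MonoidAlgebra.single (g⁻¹ : π) (1 : WittVector p K)) *
          MonoidAlgebra.single h a * MonoidAlgebra.single g 1 =
          MonoidAlgebra.single (g⁻¹ * h * g) ((1 * a) * 1) := by
        rw [MonoidAlgebra.single_mul_single, MonoidAlgebra.single_mul_single]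
      simpa using h1

lemma rho_conj (g : π) (x : MonoidAlgebra (WittVector p K) π) :
    rho p K π (MonoidAlgebra.of (WittVector p K) π g⁻¹ * x *
      MonoidAlgebra.of (WittVector p K) π g) = rho p K π x := by
  rw [conj_eq_mapDomain]
  show MonoidAlgebra.mapDomain crep (MonoidAlgebra.mapDomain (fun h => g⁻¹ * h * g) x)
      = MonoidAlgebra.mapDomain crep x
  unfold MonoidAlgebra.mapDomain
  rw [MonoidAlgebra.coeff_ofCoeff, ← Finsupp.mapDomain_comp]
  congr 2
  funext h
  exact crep_conj g h

lemma rho_eq_zero_of_mem_closure_conjSet {c : MonoidAlgebra (WittVector p K) π}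
    (hc : c ∈ AddSubgroup.closure (conjSet p K π)) : rho p K π c = 0 := by
  have : AddSubgroup.closure (conjSet p K π) ≤ (rho p K π).ker := by
    rw [AddSubgroup.closure_le]
    rintro z ⟨x, hx, g, rfl⟩
    simp only [SetLike.mem_coe, AddMonoidHom.mem_ker, map_sub, rho_conj, sub_self]
  exact AddMonoidHom.mem_ker.mp (this hc)

lemma sub_rho_mem_closure_conjSet (w : MonoidAlgebra (WittVector p K) π) :
    w - rho p K π w ∈ AddSubgroup.closure (conjSet p K π) := by
  induction w using MonoidAlgebra.induction_linear with
  | zero => simpa using zero_mem _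
  | add a b ha hb =>
      rw [map_add, ← sub_add_sub_comm]
      exact add_mem ha hb
  | single g a =>
      rw [rho_single]
      obtain ⟨c, hc⟩ := isConj_iff.mp (isConj_crep g)
      have hconj : c⁻¹ * g * c = crep g := by
        conv_lhs => rw [← hc]
        group
      set x : MonoidAlgebra (WittVector p K) π :=
        MonoidAlgebra.single g a - MonoidAlgebra.single 1 a with hxdef
      have hx : x ∈ augIdeal (WittVector p K) π := by
        rw [mem_augIdeal_iff, hxdef, map_sub, aug_single, aug_single, sub_self]
      have e1 : MonoidAlgebra.of (WittVector p K) π c⁻¹ *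
          MonoidAlgebra.single g a *
          MonoidAlgebra.of (WittVector p K) π c =
          MonoidAlgebra.single (crep g) a := by
        rw [conj_eq_mapDomain, MonoidAlgebra.mapDomain_single, hconj]
      have e2 : MonoidAlgebra.of (WittVector p K) π c⁻¹ *
          MonoidAlgebra.single (1 : π) a *
          MonoidAlgebra.of (WittVector p K) π c =
          MonoidAlgebra.single (1 : π) a := by
        rw [conj_eq_mapDomain, MonoidAlgebra.mapDomain_single]
        congr 1
        group
      have key : x - MonoidAlgebra.of (WittVector p K) π c⁻¹ * x *
          MonoidAlgebra.of (WittVector p K) π c =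
          MonoidAlgebra.single g a - MonoidAlgebra.single (crep g) a := by
        rw [hxdef, mul_sub, sub_mul, e1, e2]
        abel
      rw [← key]
      exact AddSubgroup.subset_closure ⟨x, hx, c, rfl⟩

end Rel

section Nilp

variable (p : ℕ) [Fact p.Prime] (K : Type*) [CommRing K] (π : Type*) [Group π]

/-- The operator `x ↦ ρ(Ψ(x))`. -/
noncomputable def AH : MonoidAlgebra (WittVector p K) π →+ MonoidAlgebra (WittVector p K) π :=
  (rho p K π).comp (psiHom p K π)

variable {p K π}

lemma AH_single (g : π) (a : WittVector p K) :
    AH p K π (MonoidAlgebra.single g a) =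
      MonoidAlgebra.single (crep (g ^ p)) (WittVector.frobenius a) := by
  show rho p K π (psiHom p K π (MonoidAlgebra.single g a)) = _
  rw [psiHom_single, rho_single]

lemma frob_iter_zero (k : ℕ) :
    (⇑(WittVector.frobenius : WittVector p K →+* WittVector p K))^[k] 0 = 0 :=
  Function.iterate_fixed (map_zero _) k

lemma frob_iter_add (k : ℕ) (a b : WittVector p K) :
    (⇑(WittVector.frobenius : WittVector p K →+* WittVector p K))^[k] (a + b) =
      (⇑(WittVector.frobenius : WittVector p K →+* WittVector p K))^[k] a +
        (⇑(WittVector.frobenius : WittVector p K →+* WittVector p K))^[k] b := by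
  induction k with
  | zero => simp
  | succ k ih => rw [Function.iterate_succ_apply', Function.iterate_succ_apply',
      Function.iterate_succ_apply', ih, map_add]

/-- The `k`-th iterate of `AH`, in closed form. -/
noncomputable def Tmap (k : ℕ) (x : MonoidAlgebra (WittVector p K) π) :
    MonoidAlgebra (WittVector p K) π :=
  MonoidAlgebra.ofCoeff (Finsupp.mapDomain (fun g : π => crep (g ^ p ^ k))
    (Finsupp.mapRange
      ((⇑(WittVector.frobenius : WittVector p K →+* WittVector p K))^[k])
      (frob_iter_zero k) x.coeff))

lemma Tmap_add (k : ℕ) (x y : MonoidAlgebra (WittVector p K) π) :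
    Tmap k (x + y) = Tmap k x + Tmap k y := by
  unfold Tmap
  rw [MonoidAlgebra.coeff_add, Finsupp.mapRange_add (frob_iter_add k), Finsupp.mapDomain_add,
    MonoidAlgebra.ofCoeff_add]

lemma Tmap_single (k : ℕ) (g : π) (a : WittVector p K) :
    Tmap k (MonoidAlgebra.single g a) =
      MonoidAlgebra.single (crep (g ^ p ^ k))
        ((⇑(WittVector.frobenius : WittVector p K →+* WittVector p K))^[k] a) := by
  unfold Tmap
  rw [MonoidAlgebra.coeff_single, Finsupp.mapRange_single, Finsupp.mapDomain_single,
    MonoidAlgebra.ofCoeff_single]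

lemma AH_iter (k : ℕ) (x : MonoidAlgebra (WittVector p K) π) :
    (⇑(AH p K π))^[k + 1] x = Tmap (k + 1) x := by
  induction k generalizing x with
  | zero =>
      induction x using MonoidAlgebra.induction_linear with
      | zero => simp [Tmap]
      | add a b ha hb => rw [Function.iterate_one] at ha hb ⊢
                         rw [map_add, ha, hb, Tmap_add]
      | single g a => rw [Function.iterate_one, AH_single, Tmap_single,
          Function.iterate_one, pow_one]
  | succ k ih =>
      rw [Function.iterate_succ_apply, ih]
      induction x using MonoidAlgebra.induction_linear with
      | zero => simp [Tmap]
      | add a b ha hb => rw [map_add, Tmap_add, ha, hb, Tmap_add]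
      | single g a =>
          rw [AH_single, Tmap_single, Tmap_single, crep_pow,
            ← Function.iterate_succ_apply, ← pow_mul, ← pow_succ']

lemma aug_eq_sum (x : MonoidAlgebra (WittVector p K) π) :
    aug (WittVector p K) π x = x.coeff.sum fun _ a => a := by
  induction x using MonoidAlgebra.induction_linear with
  | zero => simp
  | add a b ha hb =>
      rw [map_add, ha, hb, MonoidAlgebra.coeff_add,
        Finsupp.sum_add_index' (fun _ => rfl) (fun _ a b => rfl)]
  | single g a => rw [aug_single, MonoidAlgebra.coeff_single, Finsupp.sum_single_index rfl]

lemma mapDomain_const_one (z : π →₀ WittVector p K) :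
    Finsupp.mapDomain (fun _ : π => (1 : π)) z =
      Finsupp.single 1 (z.sum fun _ a => a) := by
  induction z using Finsupp.induction_linear with
  | zero => simp
  | add a b ha hb =>
      rw [Finsupp.mapDomain_add, ha, hb,
        Finsupp.sum_add_index' (fun _ => rfl) (fun _ a b => rfl), Finsupp.single_add]
  | single g a => rw [Finsupp.mapDomain_single, Finsupp.sum_single_index rfl]

lemma AH_nilpotent (N : ℕ) (hN : ∀ g : π, g ^ p ^ (N + 1) = 1)
    (x : MonoidAlgebra (WittVector p K) π) (hx : aug (WittVector p K) π x = 0) :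
    (⇑(AH p K π))^[N + 1] x = 0 := by
  rw [AH_iter]
  unfold Tmap
  have hfun : (fun g : π => crep (g ^ p ^ (N + 1))) = fun _ : π => (1 : π) :=
    funext fun g => by rw [hN g, crep_one]
  rw [hfun, mapDomain_const_one, Finsupp.sum_mapRange_index (fun _ => rfl)]
  set FH : WittVector p K →+ WittVector p K :=
    { toFun := (⇑(WittVector.frobenius : WittVector p K →+* WittVector p K))^[N + 1]
      map_zero' := frob_iter_zero (N + 1)
      map_add' := frob_iter_add (N + 1) } with hFH
  have : (x.coeff.sum fun _ a =>
      (⇑(WittVector.frobenius : WittVector p K →+* WittVector p K))^[N + 1] a) =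
      FH (x.coeff.sum fun _ a => a) :=
    (map_finsuppSum FH x.coeff fun _ a => a).symm
  rw [this, ← aug_eq_sum, hx, map_zero, Finsupp.single_zero, MonoidAlgebra.ofCoeff_zero]

end Nilp

section Key

variable {p : ℕ} [Fact p.Prime] {K L : Type*} [CommRing K] [CharP K p] [PerfectRing K p]
  [CommRing L] [CharP L p] [PerfectRing L p] (f : K →+* L) {π : Type*} [Group π]

lemma fmap_AH (x : MonoidAlgebra (WittVector p K) π) :
    AH p L π (fmap f x) = fmap f (AH p K π x) := by
  show rho p L π (psiHom p L π (fmap f x)) = fmap f (rho p K π (psiHom p K π x))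
  rw [← fmap_psi, ← fmap_rho]

lemma fmap_div (hf : Function.Injective f) (v : MonoidAlgebra (WittVector p L) π)
    (w : MonoidAlgebra (WittVector p K) π) (h : p • v = fmap f w) :
    ∃ w', v = fmap f w' := by
  have hpt : ∀ g : π, WittVector.map f (w.coeff g) = p • (v.coeff g) := by
    intro g
    have h1 : (p • v).coeff g = p • (v.coeff g) :=
      map_nsmul ((Finsupp.applyAddHom (M := WittVector p L) g).comp
        (MonoidAlgebra.coeffAddEquiv (R := WittVector p L) (M := π)).toAddMonoidHom) p v
    have h2 : (fmap f w).coeff g = WittVector.map f (w.coeff g) := by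
      rw [fmap_apply, MonoidAlgebra.coeff_ofCoeff, Finsupp.mapRange_apply]
    rw [← h2, ← h, h1]
  choose c hc using fun g => witt_div f hf (v.coeff g) (w.coeff g) (hpt g)
  refine ⟨MonoidAlgebra.ofCoeff (Finsupp.onFinset v.coeff.support c ?_), ?_⟩
  · intro a ha
    rw [Finsupp.mem_support_iff]
    intro hva
    apply ha
    apply WittVector.map_injective f hf
    rw [← hc a, hva, map_zero]
  · refine MonoidAlgebra.ext (Finsupp.ext fun g => ?_)
    rw [fmap_apply, MonoidAlgebra.coeff_ofCoeff (Finsupp.mapRange _ _ _), Finsupp.mapRange_apply,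
      MonoidAlgebra.coeff_ofCoeff (Finsupp.onFinset _ _ _), Finsupp.onFinset_apply, ← hc g]

lemma fmap_preimage (hf : Function.Injective f) (k : ℕ) :
    ∀ v : MonoidAlgebra (WittVector p L) π,
      (⇑(AH p L π))^[k] v = 0 →
      (∃ u, p • v - AH p L π v = fmap f u) → ∃ w, v = fmap f w := by
  induction k with
  | zero =>
      intro v hv _
      refine ⟨0, ?_⟩
      rw [map_zero]
      simpa using hv
  | succ k ih =>
      intro v hv hu
      obtain ⟨u, hu⟩ := hu
      have h1 : (⇑(AH p L π))^[k] (AH p L π v) = 0 := by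
        rw [← Function.iterate_succ_apply]; exact hv
      have h2 : p • (AH p L π v) - AH p L π (AH p L π v) = fmap f (AH p K π u) := by
        have h3 := congrArg (AH p L π) hu
        rw [map_sub, map_nsmul, fmap_AH] at h3
        exact h3
      obtain ⟨z, hz⟩ := ih (AH p L π v) h1 ⟨_, h2⟩
      have h3 : p • v = fmap f (u + z) := by
        rw [map_add, ← hu, ← hz]; abel
      exact fmap_div f hf v (u + z) h3

lemma mem_MqRel_of_fmap_mem (hf : Function.Injective f) (N : ℕ)
    (hN : ∀ g : π, g ^ p ^ (N + 1) = 1)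
    (x : MonoidAlgebra (WittVector p K) π) (hx : x ∈ augIdeal (WittVector p K) π)
    (h : fmap f x ∈ MqRel p L π) : x ∈ MqRel p K π := by
  obtain ⟨c, hc, y, hy, heq⟩ := (mem_MqRel_iff p L π _).mp h
  have h5 : p • rho p L π y - AH p L π (rho p L π y) = fmap f (rho p K π x) := by
    have h0 := congrArg (rho p L π) heq
    rw [map_add, map_sub, map_nsmul, rho_eq_zero_of_mem_closure_conjSet hc, zero_add,
      ← fmap_rho] at h0
    have hpsi : rho p L π (psi p L π y) = AH p L π (rho p L π y) := by
      show rho p L π (psiHom p L π y) = rho p L π (psiHom p L π (rho p L π y))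
      exact (rho_psi_rho y).symm
    rw [hpsi] at h0
    exact h0.symm
  have haug : aug (WittVector p L) π (rho p L π y) = 0 := by
    rw [aug_rho]; exact (mem_augIdeal_iff p L π y).mp hy
  have hnil := AH_nilpotent N hN _ haug
  obtain ⟨v', hv'⟩ := fmap_preimage f hf (N + 1) (rho p L π y) hnil ⟨_, h5⟩
  have hrho_v' : rho p K π v' = v' := by
    apply fmap_injective f hf
    rw [fmap_rho, ← hv', rho_rho, hv']
  have hv'aug : v' ∈ augIdeal (WittVector p K) π := by
    rw [mem_augIdeal_iff]
    have hz : WittVector.map f (aug (WittVector p K) π v') = 0 := by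
      rw [← aug_fmap, ← hv', haug]
    apply WittVector.map_injective f hf
    rw [hz, map_zero]
  have hrx : rho p K π x = p • v' - rho p K π (psi p K π v') := by
    apply fmap_injective f hf
    rw [map_sub, map_nsmul, ← h5, hv']
    rw [fmap_AH]
    rfl
  refine (mem_MqRel_iff p K π x).mpr
    ⟨(x - rho p K π x) + (psi p K π v' - rho p K π (psi p K π v')), ?_, v', hv'aug, ?_⟩
  · exact add_mem (sub_rho_mem_closure_conjSet x) (sub_rho_mem_closure_conjSet _)
  · rw [hrx]; abel

end Key

lemma charP_of_card_pow (p : ℕ) [Fact p.Prime] (F : Type*) [Field F] [Fintype F]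
    (k : ℕ) (hcard : Fintype.card F = p ^ k) : CharP F p := by
  have h1 : CharP F (ringChar F) := ringChar.charP F
  obtain ⟨n', hp', hcard'⟩ := FiniteField.card F (ringChar F)
  have hdvd : ringChar F ∣ p ^ k := by
    rw [← hcard, hcard']
    exact dvd_pow_self _ n'.pos.ne'
  have h2 : ringChar F = p :=
    (Nat.prime_dvd_prime_iff_eq hp' Fact.out).mp (hp'.dvd_of_dvd_pow hdvd)
  rw [← h2]
  exact h1

/-- part of the proof of Theorems 1.5 and 1.6: for a finite `p`-group
`π`, an embedding `f : 𝔽_q → 𝔽_l` of finite fields with `|𝔽_q| = q = pⁿ` and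
`|𝔽_l| = l = qᵐ` induces, via the ring homomorphism `W(𝔽_q) → W(𝔽_l)` of Witt vectors, a
homomorphism `ι : M_q → M_l`, and `ι` is injective. -/
theorem injective_iota (p n m : ℕ) [Fact p.Prime] (hn : 0 < n) (hm : 0 < m)
    (K L : Type*) [Field K] [Fintype K] [Field L] [Fintype L]
    (hK : Fintype.card K = p ^ n) (hL : Fintype.card L = (p ^ n) ^ m)
    (f : K →+* L) (π : Type*) [Group π] [Finite π] (hπ : IsPGroup p π)
    (ι : Mq p K π →+ Mq p L π)
    (hι : ∀ (x : MonoidAlgebra (WittVector p K) π)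
      (hx : x ∈ (augIdeal (WittVector p K) π).toAddSubgroup)
      (hy : MonoidAlgebra.ofCoeff (Finsupp.mapRange (⇑(WittVector.map f : WittVector p K →+* WittVector p L))
          (map_zero _) x.coeff) ∈ (augIdeal (WittVector p L) π).toAddSubgroup),
      ι (QuotientAddGroup.mk ⟨x, hx⟩) =
        QuotientAddGroup.mk
          ⟨MonoidAlgebra.ofCoeff (Finsupp.mapRange (⇑(WittVector.map f : WittVector p K →+* WittVector p L))
            (map_zero _) x.coeff), hy⟩) :
    Function.Injective ⇑ι := by
  -- Characteristic of `K` and `L` is `p`.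
  haveI hcharK : CharP K p := charP_of_card_pow p K n hK
  haveI hcharL : CharP L p := charP_of_card_pow p L (n * m) (by rw [hL, ← pow_mul])
  haveI : ExpChar K p := ExpChar.prime Fact.out
  haveI : ExpChar L p := ExpChar.prime Fact.out
  haveI : PerfectRing K p := inferInstance
  haveI : PerfectRing L p := inferInstance
  -- exponent of `π`
  obtain ⟨N, hcard⟩ := (IsPGroup.iff_card (p := p) (G := π)).mp hπ
  have hN : ∀ g : π, g ^ p ^ (N + 1) = 1 := by
    intro g
    rw [pow_succ, pow_mul, ← hcard, pow_card_eq_one', one_pow]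
  -- injectivity
  rw [injective_iff_map_eq_zero]
  intro a
  refine QuotientAddGroup.induction_on a ?_
  rintro ⟨x, hx⟩ ha
  have hy : MonoidAlgebra.ofCoeff (Finsupp.mapRange (⇑(WittVector.map f : WittVector p K →+* WittVector p L))
      (map_zero _) x.coeff) ∈ (augIdeal (WittVector p L) π).toAddSubgroup := by
    rw [Submodule.mem_toAddSubgroup, mem_augIdeal_iff]
    rw [show (MonoidAlgebra.ofCoeff (Finsupp.mapRange
        (⇑(WittVector.map f : WittVector p K →+* WittVector p L)) (map_zero _) x.coeff))
        = fmap f x from rfl]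
    rw [aug_fmap f x,
      (mem_augIdeal_iff p K π x).mp ((Submodule.mem_toAddSubgroup _).mp hx), map_zero]
  rw [hι x hx hy, QuotientAddGroup.eq_zero_iff, AddSubgroup.mem_addSubgroupOf] at ha
  have hmem : x ∈ MqRel p K π :=
    mem_MqRel_of_fmap_mem f f.injective N hN x
      ((Submodule.mem_toAddSubgroup _).mp hx) ha
  rw [QuotientAddGroup.eq_zero_iff, AddSubgroup.mem_addSubgroupOf]
  exact hmem

end GRJJ
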